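/- Consider the semidiscrete finite volume scheme for the 1D Navier–Stokes–Korteweg system on the periodic grid with N cells, with μ ≥ 0, κ > 0, pressure p differentiable on (0,∞) with p' > 0 there, and potential energy P : ℝ → ℝ differentiable and convex on (0,∞) satisfying r·P'(r) − P(r) = p(r) for all r > 0. Suppose ρ, m : ℝ → (ZMod N → ℝ) satisfy, for every time t and every index i, ρ_i(t) > 0 and the ODEs (in the sense of HasDerivAt) −dρ_i/dt = ∇ᶜ(ρu)_i − λ(t) h Δ_h ρ_i and −dm_i/dt = ∇ᶜ(ρu²)_i + ∇ᶜ(p∘ρ)_i − λ(t) h Δ_h m_i − μ Δ_h u_i − κ ∇⁻[ (ρ_{i+1} Δ_h ρ_i + ρ_i Δ_h ρ_{i+1})/2 − (1/2) (∇⁺ρ_i)² ], where u_i = m_i/ρ_i, and suppose λ(t) ≥ (1/2)·max_{i} ( |u_i(t)| + √(p'(ρ_i(t))) ) for every t. Then the total discrete energy t ↦ ∑_i E_i(t), with E_i = (1/2)ρ_i u_i² + P(ρ_i) + (κ/2)(∇⁺ρ_i)², is differentiable at every t and its derivative satisfies d/dt ∑_i E_i(t) ≤ −μ ∑_i (∇⁺u_i(t))²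 − κ λ(t) h ∑_i (Δ_h ρ_i(t))² ≤ 0. -/

import Mathlib

open Finset

noncomputable section

/-- Grid spacing `h = 1/N`. -/
def hh (N : ℕ) : ℝ := 1 / (N : ℝ)

/-- Central difference `∇ᶜφ_i = (φ_{i+1} − φ_{i−1})/(2h)`. -/
def dC (N : ℕ) (φ : ZMod N → ℝ) (i : ZMod N) : ℝ := (φ (i + 1) - φ (i - 1)) / (2 * hh N)

/-- Forward difference `∇⁺φ_i = (φ_{i+1} − φ_i)/h`. -/
def dP (N : ℕ) (φ : ZMod N → ℝ) (i : ZMod N) : ℝ := (φ (i + 1) - φ i) / hh N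

/-- Backward difference `∇⁻φ_i = (φ_i − φ_{i−1})/h`. -/
def dM (N : ℕ) (φ : ZMod N → ℝ) (i : ZMod N) : ℝ := (φ i - φ (i - 1)) / hh N

/-- Discrete Laplacian `Δ_hφ_i = (φ_{i+1} − 2φ_i + φ_{i−1})/h²`. -/
def dL (N : ℕ) (φ : ZMod N → ℝ) (i : ZMod N) : ℝ :=
  (φ (i + 1) - 2 * φ i + φ (i - 1)) / (hh N) ^ 2

/-- Right-hand side of the semidiscrete density equation: `−dρ_i/dt = Frho i`. -/
def Frho (N : ℕ) (lamt : ℝ) (ρ m : ZMod N → ℝ) (i : ZMod N) : ℝ :=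
  dC N (fun j => ρ j * (m j / ρ j)) i - lamt * hh N * dL N ρ i

/-- Right-hand side of the semidiscrete momentum equation: `−dm_i/dt = Fm i`. -/
def Fm (N : ℕ) (p : ℝ → ℝ) (μ κ lamt : ℝ) (ρ m : ZMod N → ℝ) (i : ZMod N) : ℝ :=
  dC N (fun j => ρ j * (m j / ρ j) ^ 2) i + dC N (fun j => p (ρ j)) i
    - lamt * hh N * dL N m i - μ * dL N (fun j => m j / ρ j) i
    - κ * dM N (fun j =>
        (ρ (j + 1) * dL N ρ j + ρ j * dL N ρ (j + 1)) / 2 - (1 / 2) * (dP N ρ j) ^ 2) i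

lemma zsum_shift {N : ℕ} [NeZero N] (f : ZMod N → ℝ) :
    ∑ i : ZMod N, f (i + 1) = ∑ i : ZMod N, f i :=
  Fintype.sum_equiv (Equiv.addRight 1) _ _ (fun _ => rfl)

lemma zsum_shift' {N : ℕ} [NeZero N] (f : ZMod N → ℝ) :
    ∑ i : ZMod N, f (i - 1) = ∑ i : ZMod N, f i :=
  Fintype.sum_equiv (Equiv.subRight 1) _ _ (fun _ => rfl)

lemma zsum_sbp {N : ℕ} [NeZero N] (φ ψ : ZMod N → ℝ) :
    ∑ i : ZMod N, φ i * (ψ i - ψ (i - 1)) = ∑ i : ZMod N, φ (i + 1) * (ψ (i + 1) - ψ i) := by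
  have := zsum_shift' (fun i => φ (i + 1) * (ψ (i + 1) - ψ i))
  simpa [sub_add_cancel_right] using this

lemma zsum_tel {N : ℕ} [NeZero N] (f : ZMod N → ℝ) :
    ∑ i : ZMod N, (f (i + 1) - f i) = 0 := by
  rw [Finset.sum_sub_distrib, zsum_shift]; ring

lemma zsum_dC {N : ℕ} [NeZero N] (φ ψ : ZMod N → ℝ) :
    ∑ i : ZMod N, φ i * dC N ψ i
      = (1 / (2 * hh N)) * ∑ i : ZMod N, (φ i + φ (i + 1)) * (ψ (i + 1) - ψ i) := by
  have sh := zsum_sbp φ ψ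
  calc ∑ i : ZMod N, φ i * dC N ψ i
      = ∑ i : ZMod N, (1 / (2 * hh N)) * (φ i * (ψ (i + 1) - ψ i) + φ i * (ψ i - ψ (i - 1))) := by
        refine Finset.sum_congr rfl fun i _ => ?_; simp only [dC]; ring
    _ = (1 / (2 * hh N)) * (∑ i : ZMod N, φ i * (ψ (i + 1) - ψ i)
          + ∑ i : ZMod N, φ i * (ψ i - ψ (i - 1))) := by
        rw [← Finset.sum_add_distrib, Finset.mul_sum]
    _ = (1 / (2 * hh N)) * (∑ i : ZMod N, φ i * (ψ (i + 1) - ψ i)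
          + ∑ i : ZMod N, φ (i + 1) * (ψ (i + 1) - ψ i)) := by rw [sh]
    _ = (1 / (2 * hh N)) * ∑ i : ZMod N, (φ i + φ (i + 1)) * (ψ (i + 1) - ψ i) := by
        rw [← Finset.sum_add_distrib]; congr 1
        exact Finset.sum_congr rfl fun i _ => by ring

lemma zsum_dL {N : ℕ} [NeZero N] (φ ψ : ZMod N → ℝ) :
    ∑ i : ZMod N, φ i * dL N ψ i
      = -(1 / hh N ^ 2) * ∑ i : ZMod N, (φ (i + 1) - φ i) * (ψ (i + 1) - ψ i) := by
  have sh := zsum_sbp φ ψ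
  calc ∑ i : ZMod N, φ i * dL N ψ i
      = ∑ i : ZMod N, (1 / hh N ^ 2) * (φ i * (ψ (i + 1) - ψ i) - φ i * (ψ i - ψ (i - 1))) := by
        refine Finset.sum_congr rfl fun i _ => ?_; simp only [dL]; ring
    _ = (1 / hh N ^ 2) * (∑ i : ZMod N, φ i * (ψ (i + 1) - ψ i)
          - ∑ i : ZMod N, φ i * (ψ i - ψ (i - 1))) := by
        rw [← Finset.sum_sub_distrib, Finset.mul_sum]
    _ = (1 / hh N ^ 2) * (∑ i : ZMod N, φ i * (ψ (i + 1) - ψ i)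
          - ∑ i : ZMod N, φ (i + 1) * (ψ (i + 1) - ψ i)) := by rw [sh]
    _ = -(1 / hh N ^ 2) * ∑ i : ZMod N, (φ (i + 1) - φ i) * (ψ (i + 1) - ψ i) := by
        rw [← Finset.sum_sub_distrib, Finset.mul_sum, neg_mul, Finset.mul_sum,
          ← Finset.sum_neg_distrib]
        exact Finset.sum_congr rfl fun i _ => by ring

lemma zsum_dM {N : ℕ} [NeZero N] (φ ψ : ZMod N → ℝ) :
    ∑ i : ZMod N, φ i * (ψ i - ψ (i - 1)) = -∑ i : ZMod N, (φ (i + 1) - φ i) * ψ i := by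
  have sh : ∑ i : ZMod N, φ i * ψ (i - 1) = ∑ i : ZMod N, φ (i + 1) * ψ i := by
    have := zsum_shift' (fun i => φ (i + 1) * ψ i)
    simpa [sub_add_cancel_right] using this
  calc ∑ i : ZMod N, φ i * (ψ i - ψ (i - 1))
      = ∑ i : ZMod N, φ i * ψ i - ∑ i : ZMod N, φ i * ψ (i - 1) := by
        rw [← Finset.sum_sub_distrib]; exact Finset.sum_congr rfl fun i _ => by ring
    _ = ∑ i : ZMod N, φ i * ψ i - ∑ i : ZMod N, φ (i + 1) * ψ i := by rw [sh]
    _ = -∑ i : ZMod N, (φ (i + 1) - φ i) * ψ i := by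
        rw [← Finset.sum_sub_distrib, ← Finset.sum_neg_distrib]
        exact Finset.sum_congr rfl fun i _ => by ring

lemma zsum_dPf {N : ℕ} [NeZero N] (φ ψ : ZMod N → ℝ) :
    ∑ i : ZMod N, φ i * (ψ (i + 1) - ψ i) = -∑ i : ZMod N, (φ i - φ (i - 1)) * ψ i := by
  have sh : ∑ i : ZMod N, φ i * ψ (i + 1) = ∑ i : ZMod N, φ (i - 1) * ψ i := by
    have := zsum_shift (fun i => φ (i - 1) * ψ i)
    simpa [add_sub_cancel_right] using this
  calc ∑ i : ZMod N, φ i * (ψ (i + 1) - ψ i)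
      = ∑ i : ZMod N, φ i * ψ (i + 1) - ∑ i : ZMod N, φ i * ψ i := by
        rw [← Finset.sum_sub_distrib]; exact Finset.sum_congr rfl fun i _ => by ring
    _ = ∑ i : ZMod N, φ (i - 1) * ψ i - ∑ i : ZMod N, φ i * ψ i := by rw [sh]
    _ = -∑ i : ZMod N, (φ i - φ (i - 1)) * ψ i := by
        rw [← Finset.sum_sub_distrib, ← Finset.sum_neg_distrib]
        exact Finset.sum_congr rfl fun i _ => by ring
lemma grad_ineq {Pf P' : ℝ → ℝ} (hconv : ConvexOn ℝ (Set.Ioi (0:ℝ)) Pf)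
    (hP : ∀ r : ℝ, 0 < r → HasDerivAt Pf (P' r) r)
    {x y : ℝ} (hx : 0 < x) (hy : 0 < y) :
    P' x * (y - x) ≤ Pf y - Pf x := by
  rcases lt_trichotomy x y with h | h | h
  · have := hconv.le_slope_of_hasDerivAt (Set.mem_Ioi.2 hx) (Set.mem_Ioi.2 hy) h (hP x hx)
    rw [slope_def_field] at this
    have h2 : 0 < y - x := by linarith
    calc P' x * (y - x) ≤ (Pf y - Pf x) / (y - x) * (y - x) := by
          exact mul_le_mul_of_nonneg_right this h2.le
      _ = Pf y - Pf x := by field_simp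
  · subst h; simp
  · have := hconv.slope_le_of_hasDerivAt (Set.mem_Ioi.2 hy) (Set.mem_Ioi.2 hx) h (hP x hx)
    rw [slope_def_field] at this
    have h2 : 0 < x - y := by linarith
    have h3 : Pf x - Pf y ≤ P' x * (x - y) := by
      calc Pf x - Pf y = (Pf x - Pf y) / (x - y) * (x - y) := by field_simp
        _ ≤ P' x * (x - y) := mul_le_mul_of_nonneg_right this h2.le
    nlinarith [h3]

lemma key_ineq (a0 a1 u0 u1 l D2 B : ℝ) (ha0 : 0 < a0) (ha1 : 0 < a1)
    (hl0 : |u0| ≤ 2 * l) (hl1 : |u1| ≤ 2 * l) (hD2 : 0 ≤ D2) (hB : |B| ≤ D2 / 2) :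
    0 ≤ l * ((a0 + a1) / 2 * (u1 - u0) ^ 2 + D2)
      - (1 / 4) * ((a0 + a1) / 2) * (u1 - u0) ^ 3
      - (1 / 4) * ((u0 + u1) / 2) * (u1 - u0) ^ 2 * (a1 - a0)
      - (1 / 4) * (u1 - u0) * D2 + ((u0 + u1) / 2) * B := by
  have h4l : |u1 - u0| + |u1 + u0| ≤ 4 * l := by
    rcases abs_cases (u1 - u0) with ⟨e1, _⟩ | ⟨e1, _⟩ <;>
      rcases abs_cases (u1 + u0) with ⟨e2, _⟩ | ⟨e2, _⟩ <;>
      rw [e1, e2] <;>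
      linarith [le_abs_self u0, neg_abs_le u0, le_abs_self u1, neg_abs_le u1]
  have hD1 : 0 ≤ (a0 + a1) / 2 * (u1 - u0) ^ 2 := by positivity
  have habs1 : 0 ≤ |u1 - u0| := abs_nonneg _
  have habs2 : 0 ≤ |u1 + u0| := abs_nonneg _
  have hA1 : u1 - u0 ≤ |u1 - u0| := le_abs_self _
  have hA2 : -(|u1 - u0|) ≤ u1 - u0 := neg_abs_le _
  have hS1 : u0 + u1 ≤ |u1 + u0| := by rcases abs_cases (u1 + u0) with ⟨e, _⟩ | ⟨e, _⟩ <;> linarith [abs_nonneg (u1+u0)]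
  have hS2 : -(|u1 + u0|) ≤ u0 + u1 := by rcases abs_cases (u1 + u0) with ⟨e, _⟩ | ⟨e, _⟩ <;> linarith [abs_nonneg (u1+u0)]
  have hB1 : B ≤ D2 / 2 := le_trans (le_abs_self _) hB
  have hB2 : -(D2 / 2) ≤ B := by have := neg_abs_le B; linarith [hB]
  -- b1 : cubic term
  have b1 : (1 / 4) * ((a0 + a1) / 2) * (u1 - u0) ^ 3
      ≤ (1 / 4) * |u1 - u0| * ((a0 + a1) / 2 * (u1 - u0) ^ 2) := by
    nlinarith [mul_nonneg (mul_nonneg (by positivity : (0:ℝ) ≤ (a0 + a1) / 8)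
      (sub_nonneg.2 hA1)) (sq_nonneg (u1 - u0))]
  -- b2 : mixed kinetic term
  have b2 : (1 / 4) * ((u0 + u1) / 2) * (u1 - u0) ^ 2 * (a1 - a0)
      ≤ (1 / 4) * |u1 + u0| * ((a0 + a1) / 2 * (u1 - u0) ^ 2) := by
    have hsa : (u0 + u1) * (a1 - a0) ≤ |u1 + u0| * (a0 + a1) := by
      nlinarith [hS1, hS2, ha0.le, ha1.le, habs2]
    nlinarith [mul_nonneg (sq_nonneg (u1 - u0)) (sub_nonneg.2 hsa)]
  -- b3
  have b3 : (1 / 4) * (u1 - u0) * D2 ≤ (1 / 4) * |u1 - u0| * D2 := by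
    nlinarith [mul_nonneg (sub_nonneg.2 hA1) hD2]
  -- b4
  have b4 : -(((u0 + u1) / 2) * B) ≤ (1 / 4) * |u1 + u0| * D2 := by
    have h1 : -((u0 + u1) * B) ≤ |u0 + u1| * |B| := by
      calc -((u0 + u1) * B) ≤ |(u0 + u1) * B| := neg_le_abs _
        _ = |u0 + u1| * |B| := abs_mul _ _
    have h2 : |u0 + u1| * |B| ≤ |u0 + u1| * (D2 / 2) :=
      mul_le_mul_of_nonneg_left hB (abs_nonneg _)
    have h3 : |u0 + u1| = |u1 + u0| := by rw [add_comm]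
    rw [h3] at h1 h2
    linarith
  have hfin : 0 ≤ (4 * l - |u1 - u0| - |u1 + u0|) * ((a0 + a1) / 2 * (u1 - u0) ^ 2 + D2) :=
    mul_nonneg (by linarith) (by linarith)
  linarith [hfin, b1, b2, b3, b4]

set_option maxHeartbeats 1000000 in
/-- Energy dissipation for the 1D semidiscrete NSK scheme (Theorem 3.2). -/
theorem energy_dissipation_1d
    (N : ℕ) [NeZero N]
    (p p' P P' : ℝ → ℝ) (μ κ : ℝ) (lam : ℝ → ℝ)
    (hμ : 0 ≤ μ) (hκ : 0 < κ)
    (hp : ∀ r : ℝ, 0 < r → HasDerivAt p (p' r) r)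
    (hp'pos : ∀ r : ℝ, 0 < r → 0 < p' r)
    (hP : ∀ r : ℝ, 0 < r → HasDerivAt P (P' r) r)
    (hPconv : ConvexOn ℝ (Set.Ioi (0 : ℝ)) P)
    (hPp : ∀ r : ℝ, 0 < r → r * P' r - P r = p r)
    (ρ m : ℝ → ZMod N → ℝ)
    (hpos : ∀ t : ℝ, ∀ i : ZMod N, 0 < ρ t i)
    (hρ : ∀ t : ℝ, ∀ i : ZMod N,
      HasDerivAt (fun s => ρ s i) (-(Frho N (lam t) (ρ t) (m t) i)) t)
    (hm : ∀ t : ℝ, ∀ i : ZMod N,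
      HasDerivAt (fun s => m s i) (-(Fm N p μ κ (lam t) (ρ t) (m t) i)) t)
    (hlam : ∀ t : ℝ, lam t ≥ (1 / 2) *
      Finset.univ.sup' ⟨0, Finset.mem_univ 0⟩
        (fun i : ZMod N => |m t i / ρ t i| + Real.sqrt (p' (ρ t i)))) :
    ∀ t : ℝ,
      DifferentiableAt ℝ (fun s => ∑ i : ZMod N,
        ((1 / 2) * ρ s i * (m s i / ρ s i) ^ 2 + P (ρ s i)
          + κ / 2 * (dP N (ρ s) i) ^ 2)) t ∧
      deriv (fun s => ∑ i : ZMod N,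
        ((1 / 2) * ρ s i * (m s i / ρ s i) ^ 2 + P (ρ s i)
          + κ / 2 * (dP N (ρ s) i) ^ 2)) t
        ≤ -μ * ∑ i : ZMod N, (dP N (fun j => m t j / ρ t j) i) ^ 2
            - κ * lam t * hh N * ∑ i : ZMod N, (dL N (ρ t) i) ^ 2 ∧
      -μ * ∑ i : ZMod N, (dP N (fun j => m t j / ρ t j) i) ^ 2
            - κ * lam t * hh N * ∑ i : ZMod N, (dL N (ρ t) i) ^ 2 ≤ 0 := by
  intro t
  have hpost : ∀ i : ZMod N, 0 < ρ t i := hpos t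
  have hρt := hρ t
  have hmt := hm t
  have hlamt := hlam t
  have hN0 : (0 : ℝ) < (N : ℝ) := by
    exact_mod_cast Nat.pos_of_ne_zero (NeZero.ne N)
  have hh0 : 0 < hh N := by rw [hh]; positivity
  have hhne : hh N ≠ 0 := ne_of_gt hh0
  set l := lam t with hl
  set a := ρ t with haa
  set bb := m t with hbbdef
  have hane : ∀ i : ZMod N, a i ≠ 0 := fun i => (hpost i).ne'
  set u : ZMod N → ℝ := fun i => bb i / a i with hu
  set rd : ZMod N → ℝ := fun i => -(Frho N l a bb i) with hrdd
  set md : ZMod N → ℝ := fun i => -(Fm N p μ κ l a bb i) with hmdd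
  set K : ZMod N → ℝ := fun j =>
    (a (j + 1) * dL N a j + a j * dL N a (j + 1)) / 2 - (1 / 2) * (dP N a j) ^ 2 with hK
  set v1 : ZMod N → ℝ := fun i => P' (a i) - u i ^ 2 / 2 with hv1
  set qf : ZMod N → ℝ := fun j => a j * u j ^ 3 / 2 + a j * u j * P' (a j) with hqf
  set Graw : ZMod N → ℝ := fun i =>
    (1 / 2) * ((v1 i + v1 (i + 1)) * (a (i + 1) * u (i + 1) - a i * u i))
    + (1 / 2) * ((u i + u (i + 1)) * (a (i + 1) * u (i + 1) ^ 2 - a i * u i ^ 2))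
    + (1 / 2) * ((u i + u (i + 1)) * (p (a (i + 1)) - p (a i)))
    + l * ((v1 (i + 1) - v1 i) * (a (i + 1) - a i))
    + l * ((u (i + 1) - u i) * (a (i + 1) * u (i + 1) - a i * u i))
    - (qf (i + 1) - qf i) with hGraw
  -- ## Derivative construction
  have hder : ∀ i : ZMod N, HasDerivAt
      (fun s => (1 / 2) * ρ s i * (m s i / ρ s i) ^ 2 + P (ρ s i) + κ / 2 * (dP N (ρ s) i) ^ 2)
      (u i * md i - u i ^ 2 / 2 * rd i + P' (a i) * rd i
        + κ * ((a (i + 1) - a i) / hh N) * ((rd (i + 1) - rd i) / hh N)) t := by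
    intro i
    have h1 : HasDerivAt (fun s => ρ s i) (rd i) t := by
      simp only [hrdd]; exact hρt i
    have h1' : HasDerivAt (fun s => ρ s (i + 1)) (rd (i + 1)) t := by
      simp only [hrdd]; exact hρt (i + 1)
    have h2 : HasDerivAt (fun s => m s i) (md i) t := by
      simp only [hmdd]; exact hmt i
    have k1 : HasDerivAt (fun s => (1 / 2) * ρ s i * (m s i / ρ s i) ^ 2)
        (u i * md i - u i ^ 2 / 2 * rd i) t := by
      have heq : (fun s => (1 / 2) * ρ s i * (m s i / ρ s i) ^ 2)
          = fun s => m s i ^ 2 / (2 * ρ s i) := by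
        funext s
        have hs : ρ s i ≠ 0 := (hpos s i).ne'
        field_simp
      rw [heq]
      have hden : (2 : ℝ) * ρ t i ≠ 0 := mul_ne_zero two_ne_zero (hpos t i).ne'
      have hd := (h2.fun_pow 2).fun_div (h1.const_mul 2) hden
      refine hd.congr_deriv ?_
      simp only [hu, ← haa, ← hbbdef]
      field_simp [hane i]
      ring
    have k2 : HasDerivAt (fun s => P (ρ s i)) (P' (a i) * rd i) t := by
      have hcomp := (hP (ρ t i) (hpos t i)).comp t h1
      exact hcomp
    have k3 : HasDerivAt (fun s => κ / 2 * (dP N (ρ s) i) ^ 2)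
        (κ * ((a (i + 1) - a i) / hh N) * ((rd (i + 1) - rd i) / hh N)) t := by
      have heq : (fun s => κ / 2 * (dP N (ρ s) i) ^ 2)
          = fun s => κ / 2 * ((ρ s (i + 1) - ρ s i) / hh N) ^ 2 := by
        funext s; rw [dP]
      rw [heq]
      have hd := ((h1'.fun_sub h1).div_const (hh N)).fun_pow 2
      have hd2 := hd.const_mul (κ / 2)
      refine hd2.congr_deriv ?_
      simp only [← haa]
      ring
    exact (k1.add k2).add k3
  have hsum := HasDerivAt.fun_sum (u := Finset.univ) (fun i _ => hder i)
  refine ⟨hsum.differentiableAt, ?_, ?_⟩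
  · -- main inequality
    rw [hsum.deriv]
    -- explicit forms of rd and md
    have hrd3 : ∀ i : ZMod N, rd i = -(dC N (fun j => a j * u j) i) + l * hh N * dL N a i := by
      intro i
      simp only [hrdd, Frho, hu]
      ring
    have hmd3 : ∀ i : ZMod N, md i = -(dC N (fun j => a j * u j ^ 2) i)
        - dC N (fun j => p (a j)) i + l * hh N * dL N (fun j => a j * u j) i
        + μ * dL N u i + κ * ((K i - K (i - 1)) / hh N) := by
      intro i
      have hdLbb : dL N (fun j => a j * (bb j / a j)) i = dL N bb i := by
        simp only [dL]
        rw [mul_div_cancel₀ _ (hane (i + 1)), mul_div_cancel₀ _ (hane i),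
          mul_div_cancel₀ _ (hane (i - 1))]
      simp only [hmdd, Fm, dM, hu, hK]
      rw [hdLbb]
      ring
    -- viscous identity
    have hvisc : ∑ i : ZMod N, u i * dL N u i = -∑ i : ZMod N, (dP N u i) ^ 2 := by
      rw [zsum_dL u u]
      have e : ∑ i : ZMod N, (dP N u i) ^ 2
          = (1 / hh N ^ 2) * ∑ i : ZMod N, (u (i + 1) - u i) * (u (i + 1) - u i) := by
        rw [Finset.mul_sum]
        exact Finset.sum_congr rfl fun i _ => by rw [dP]; ring
      rw [e]; ring
    -- Korteweg transport term
    have hSGm : ∑ i : ZMod N, u i * (K i - K (i - 1))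
        = -∑ i : ZMod N, K i * (u (i + 1) - u i) := by
      rw [zsum_dM u K]
      congr 1
      exact Finset.sum_congr rfl fun i _ => by ring
    -- capillary energy term
    have hSH : ∑ i : ZMod N, (a (i + 1) - a i) * (rd (i + 1) - rd i)
        = -∑ i : ZMod N, ((a (i + 1) - a i) - (a i - a (i - 1))) * rd i := by
      have := zsum_dPf (fun i => a (i + 1) - a i) rd
      simpa [sub_add_cancel_right] using this
    have hLrd : ∑ i : ZMod N, ((a (i + 1) - a i) - (a i - a (i - 1))) * rd i
        = hh N ^ 2 * ∑ i : ZMod N, dL N a i * rd i := by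
      have hsq : (hh N : ℝ) ^ 2 ≠ 0 := pow_ne_zero 2 hhne
      rw [Finset.mul_sum]
      refine Finset.sum_congr rfl fun i _ => ?_
      rw [dL]
      rw [show (a (i + 1) - 2 * a i + a (i - 1)) / hh N ^ 2 * rd i
          = (a (i + 1) - 2 * a i + a (i - 1)) * rd i / hh N ^ 2 from by ring]
      rw [mul_comm (hh N ^ 2), div_mul_cancel₀ _ hsq]
      ring
    have hLrd2 : ∑ i : ZMod N, dL N a i * rd i
        = -(∑ i : ZMod N, dL N a i * dC N (fun j => a j * u j) i)
          + l * hh N * ∑ i : ZMod N, (dL N a i) ^ 2 := by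
      rw [← Finset.sum_neg_distrib, Finset.mul_sum, ← Finset.sum_add_distrib]
      refine Finset.sum_congr rfl fun i _ => ?_
      rw [hrd3 i]; ring
    -- capillary consistency identity
    have hcap : ∑ i : ZMod N, dL N a i * dC N (fun j => a j * u j) i
        = (1 / hh N) * ∑ i : ZMod N, K i * (u (i + 1) - u i) := by
      have c3a : ∑ i : ZMod N, dL N a i * dC N (fun j => a j * u j) i
          = (1 / (2 * hh N)) * ∑ i : ZMod N,
              (dL N a i + dL N a (i + 1)) * (a (i + 1) * u (i + 1) - a i * u i) := by
        simpa using zsum_dC (fun i => dL N a i) (fun j => a j * u j)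
      have c3d : ∑ i : ZMod N, u i * ((a i - a (i - 1)) * dL N a i)
          = ∑ i : ZMod N, u (i + 1) * ((a (i + 1) - a i) * dL N a (i + 1)) := by
        have := zsum_shift' (fun i => u (i + 1) * ((a (i + 1) - a i) * dL N a (i + 1)))
        simpa [sub_add_cancel_right] using this
      have c3f : ∑ i : ZMod N, u i * (a i - a (i - 1)) ^ 2
          = ∑ i : ZMod N, u (i + 1) * (a (i + 1) - a i) ^ 2 := by
        have := zsum_shift' (fun i => u (i + 1) * (a (i + 1) - a i) ^ 2)
        simpa [sub_add_cancel_right] using this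
      have e2 : ∀ i : ZMod N, (dL N a i + dL N a (i + 1)) * (a (i + 1) * u (i + 1) - a i * u i)
          - 2 * (K i * (u (i + 1) - u i))
          = u i * ((a (i + 1) - a i) * dL N a i)
            + u (i + 1) * ((a (i + 1) - a i) * dL N a (i + 1))
            + (1 / hh N ^ 2) * ((a (i + 1) - a i) ^ 2 * (u (i + 1) - u i)) := by
        intro i
        simp only [hK, dL, dP]
        field_simp
        ring
      have e3 : ∀ i : ZMod N, u i * ((a (i + 1) - a i) * dL N a i)
            + u i * ((a i - a (i - 1)) * dL N a i)
          = (1 / hh N ^ 2) * (u i * (a (i + 1) - a i) ^ 2 - u i * (a i - a (i - 1)) ^ 2) := by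
        intro i
        simp only [dL]
        field_simp
        ring
      have big : ∑ i : ZMod N,
          ((dL N a i + dL N a (i + 1)) * (a (i + 1) * u (i + 1) - a i * u i)
            - 2 * (K i * (u (i + 1) - u i))) = 0 := by
        have t1 : ∑ i : ZMod N,
            ((dL N a i + dL N a (i + 1)) * (a (i + 1) * u (i + 1) - a i * u i)
              - 2 * (K i * (u (i + 1) - u i)))
            = ∑ i : ZMod N, (u i * ((a (i + 1) - a i) * dL N a i)
              + u (i + 1) * ((a (i + 1) - a i) * dL N a (i + 1))
              + (1 / hh N ^ 2) * ((a (i + 1) - a i) ^ 2 * (u (i + 1) - u i))) :=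
          Finset.sum_congr rfl fun i _ => e2 i
        rw [t1]
        rw [Finset.sum_add_distrib, Finset.sum_add_distrib, ← Finset.mul_sum]
        rw [← c3d]
        have t2 : ∑ i : ZMod N, u i * ((a (i + 1) - a i) * dL N a i)
            + ∑ i : ZMod N, u i * ((a i - a (i - 1)) * dL N a i)
            = (1 / hh N ^ 2) * (∑ i : ZMod N, u i * (a (i + 1) - a i) ^ 2
              - ∑ i : ZMod N, u i * (a i - a (i - 1)) ^ 2) := by
          rw [← Finset.sum_sub_distrib, Finset.mul_sum, ← Finset.sum_add_distrib]
          exact Finset.sum_congr rfl fun i _ => e3 i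
        rw [t2, c3f]
        have t3 : ∑ i : ZMod N, (a (i + 1) - a i) ^ 2 * (u (i + 1) - u i)
            = ∑ i : ZMod N, u (i + 1) * (a (i + 1) - a i) ^ 2
              - ∑ i : ZMod N, u i * (a (i + 1) - a i) ^ 2 := by
          rw [← Finset.sum_sub_distrib]
          exact Finset.sum_congr rfl fun i _ => by ring
        rw [t3]
        ring
      have big2 : ∑ i : ZMod N,
          (dL N a i + dL N a (i + 1)) * (a (i + 1) * u (i + 1) - a i * u i)
          = 2 * ∑ i : ZMod N, K i * (u (i + 1) - u i) := by
        rw [Finset.sum_sub_distrib] at big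
        have := sub_eq_zero.mp big
        rw [this, ← Finset.mul_sum]
      rw [c3a, big2]
      ring
    -- Euler flux identities
    have hA : ∑ i : ZMod N, v1 i * dC N (fun j => a j * u j) i
        = (1 / (2 * hh N)) * ∑ i : ZMod N,
            (v1 i + v1 (i + 1)) * (a (i + 1) * u (i + 1) - a i * u i) := by
      simpa using zsum_dC v1 (fun j => a j * u j)
    have hCc : ∑ i : ZMod N, u i * dC N (fun j => a j * u j ^ 2) i
        = (1 / (2 * hh N)) * ∑ i : ZMod N,
            (u i + u (i + 1)) * (a (i + 1) * u (i + 1) ^ 2 - a i * u i ^ 2) := by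
      simpa using zsum_dC u (fun j => a j * u j ^ 2)
    have hDd : ∑ i : ZMod N, u i * dC N (fun j => p (a j)) i
        = (1 / (2 * hh N)) * ∑ i : ZMod N,
            (u i + u (i + 1)) * (p (a (i + 1)) - p (a i)) := by
      simpa using zsum_dC u (fun j => p (a j))
    have hBb : ∑ i : ZMod N, v1 i * dL N a i
        = -(1 / hh N ^ 2) * ∑ i : ZMod N, (v1 (i + 1) - v1 i) * (a (i + 1) - a i) :=
      zsum_dL v1 a
    have hEe : ∑ i : ZMod N, u i * dL N (fun j => a j * u j) i
        = -(1 / hh N ^ 2) * ∑ i : ZMod N,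
            (u (i + 1) - u i) * (a (i + 1) * u (i + 1) - a i * u i) := by
      simpa using zsum_dL u (fun j => a j * u j)
    have htel : ∑ i : ZMod N, (qf (i + 1) - qf i) = 0 := zsum_tel qf
    have hGsum : ∑ i : ZMod N, Graw i
        = (1 / 2) * ∑ i : ZMod N, (v1 i + v1 (i + 1)) * (a (i + 1) * u (i + 1) - a i * u i)
          + (1 / 2) * ∑ i : ZMod N, (u i + u (i + 1)) * (a (i + 1) * u (i + 1) ^ 2 - a i * u i ^ 2)
          + (1 / 2) * ∑ i : ZMod N, (u i + u (i + 1)) * (p (a (i + 1)) - p (a i))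
          + l * ∑ i : ZMod N, (v1 (i + 1) - v1 i) * (a (i + 1) - a i)
          + l * ∑ i : ZMod N, (u (i + 1) - u i) * (a (i + 1) * u (i + 1) - a i * u i) := by
      simp only [hGraw]
      rw [Finset.sum_sub_distrib, htel, sub_zero]
      rw [Finset.sum_add_distrib, Finset.sum_add_distrib, Finset.sum_add_distrib,
        Finset.sum_add_distrib, ← Finset.mul_sum, ← Finset.mul_sum, ← Finset.mul_sum,
        ← Finset.mul_sum, ← Finset.mul_sum]
    -- assemble the main identity
    have hmain : ∑ i : ZMod N, (u i * md i - u i ^ 2 / 2 * rd i + P' (a i) * rd i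
          + κ * ((a (i + 1) - a i) / hh N) * ((rd (i + 1) - rd i) / hh N))
        = -(1 / hh N) * ∑ i : ZMod N, Graw i - μ * ∑ i : ZMod N, (dP N u i) ^ 2
          - κ * l * hh N * ∑ i : ZMod N, (dL N a i) ^ 2 := by
      have step1 : ∑ i : ZMod N, (u i * md i - u i ^ 2 / 2 * rd i + P' (a i) * rd i
            + κ * ((a (i + 1) - a i) / hh N) * ((rd (i + 1) - rd i) / hh N))
          = ∑ i : ZMod N, (v1 i * rd i) + ∑ i : ZMod N, (u i * md i)
            + (κ / hh N ^ 2) * ∑ i : ZMod N, ((a (i + 1) - a i) * (rd (i + 1) - rd i)) := by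
        simp only [Finset.mul_sum, ← Finset.sum_add_distrib]
        refine Finset.sum_congr rfl fun i _ => ?_
        simp only [hv1]
        ring
      have step2 : ∑ i : ZMod N, (v1 i * rd i)
          = ∑ i : ZMod N, (-(v1 i * dC N (fun j => a j * u j) i)
              + l * hh N * (v1 i * dL N a i)) :=
        Finset.sum_congr rfl fun i _ => by rw [hrd3 i]; ring
      have step3 : ∑ i : ZMod N, (u i * md i)
          = ∑ i : ZMod N, (-(u i * dC N (fun j => a j * u j ^ 2) i)
              - u i * dC N (fun j => p (a j)) i
              + l * hh N * (u i * dL N (fun j => a j * u j) i)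
              + μ * (u i * dL N u i)
              + (κ / hh N) * (u i * (K i - K (i - 1)))) :=
        Finset.sum_congr rfl fun i _ => by rw [hmd3 i]; ring
      rw [step1, step2, step3]
      simp only [Finset.sum_add_distrib, Finset.sum_sub_distrib, Finset.sum_neg_distrib,
        ← Finset.mul_sum]
      rw [hA, hBb, hCc, hDd, hEe, hvisc, hSGm, hSH, hLrd, hLrd2, hcap, hGsum]
      field_simp
      ring
    rw [hmain]
    -- pointwise reduction of Graw and positivity
    have hu2l : ∀ j : ZMod N, |u j| ≤ 2 * l := by
      intro j
      have h1 : |bb j / a j| + Real.sqrt (p' (a j))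
          ≤ Finset.univ.sup' ⟨0, Finset.mem_univ 0⟩
            (fun i : ZMod N => |bb i / a i| + Real.sqrt (p' (a i))) :=
        Finset.le_sup' (fun i : ZMod N => |bb i / a i| + Real.sqrt (p' (a i)))
          (Finset.mem_univ j)
      have h3 := Real.sqrt_nonneg (p' (a j))
      have h4 : |u j| = |bb j / a j| := by rw [hu]
      linarith [hlamt]
    have hGnn : 0 ≤ ∑ i : ZMod N, Graw i := by
      refine Finset.sum_nonneg fun i _ => ?_
      have e0 := hPp (a i) (hpost i)
      have e1 := hPp (a (i + 1)) (hpost (i + 1))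
      have g1 := grad_ineq hPconv hP (hpost i) (hpost (i + 1))
      have g2 := grad_ineq hPconv hP (hpost (i + 1)) (hpost i)
      have hD2i : 0 ≤ (P' (a (i + 1)) - P' (a i)) * (a (i + 1) - a i) := by nlinarith [g1, g2]
      have hBBi : |(P' (a i) + P' (a (i + 1))) / 2 * (a (i + 1) - a i)
            - (P (a (i + 1)) - P (a i))|
          ≤ (P' (a (i + 1)) - P' (a i)) * (a (i + 1) - a i) / 2 := by
        rw [abs_le]
        constructor <;> nlinarith [g1, g2]
      have hred : Graw i
          = l * ((a i + a (i + 1)) / 2 * (u (i + 1) - u i) ^ 2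
              + (P' (a (i + 1)) - P' (a i)) * (a (i + 1) - a i))
            - (1 / 4) * ((a i + a (i + 1)) / 2) * (u (i + 1) - u i) ^ 3
            - (1 / 4) * ((u i + u (i + 1)) / 2) * (u (i + 1) - u i) ^ 2 * (a (i + 1) - a i)
            - (1 / 4) * (u (i + 1) - u i) * ((P' (a (i + 1)) - P' (a i)) * (a (i + 1) - a i))
            + ((u i + u (i + 1)) / 2)
              * ((P' (a i) + P' (a (i + 1))) / 2 * (a (i + 1) - a i)
                - (P (a (i + 1)) - P (a i))) := by
        simp only [hGraw, hv1, hqf]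
        rw [← e0, ← e1]
        ring
      rw [hred]
      exact key_ineq (a i) (a (i + 1)) (u i) (u (i + 1)) l _ _ (hpost i) (hpost (i + 1))
        (hu2l i) (hu2l (i + 1)) hD2i hBBi
    have hpos1h : 0 ≤ (1 / hh N) * ∑ i : ZMod N, Graw i :=
      mul_nonneg (by positivity) hGnn
    linarith
  · -- RHS nonpositive
    have hl0 : 0 ≤ l := by
      have h1 : |bb 0 / a 0| + Real.sqrt (p' (a 0))
          ≤ Finset.univ.sup' ⟨0, Finset.mem_univ 0⟩
            (fun i : ZMod N => |bb i / a i| + Real.sqrt (p' (a i))) :=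
        Finset.le_sup' (fun i : ZMod N => |bb i / a i| + Real.sqrt (p' (a i)))
          (Finset.mem_univ (0 : ZMod N))
      have h2 : (0 : ℝ) ≤ |bb 0 / a 0| + Real.sqrt (p' (a 0)) := by positivity
      linarith [hlamt]
    have s1 : 0 ≤ ∑ i : ZMod N, (dP N u i) ^ 2 :=
      Finset.sum_nonneg fun i _ => sq_nonneg _
    have s2 : 0 ≤ ∑ i : ZMod N, (dL N a i) ^ 2 :=
      Finset.sum_nonneg fun i _ => sq_nonneg _
    nlinarith [mul_nonneg hμ s1, mul_nonneg (mul_nonneg (mul_nonneg hκ.le hl0) hh0.le) s2]
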